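/- Let p and q be distinct primes. The complement of the proper power graph of the cyclic group ℤ/pqℤ is isomorphic to the disjoint union K_{p−1,q−1} ∪ K̄_{(p−1)(q−1)}: the p − 1 elements of order p and the q − 1 elements of order q form a complete bipartite graph K_{p−1,q−1}, and the (p−1)(q−1) generators of the group are isolated vertices. -/

import Mathlib

open SimpleGraph

/-- The complement of the proper power graph of a finite group `G`: vertices are the
non-identity elements of `G`, and two vertices are adjacent iff neither is a power
of the other. -/
def propPowerCompl (G : Type*) [Group G] : SimpleGraph {g : G // g ≠ 1} where
  Adj u v := (u : G) ∉ Subgroup.zpowers (v : G) ∧ (v : G) ∉ Subgroup.zpowers (u : G)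
  symm := ⟨fun u v h => ⟨h.2, h.1⟩⟩
  loopless := ⟨fun u h => h.1 (Subgroup.mem_zpowers _)⟩

/-- The disjoint union of two simple graphs. -/
def SimpleGraph.disjUnionGraph {V₁ V₂ : Type*} (G₁ : SimpleGraph V₁) (G₂ : SimpleGraph V₂) :
    SimpleGraph (V₁ ⊕ V₂) where
  Adj u v := match u, v with
    | Sum.inl a, Sum.inl b => G₁.Adj a b
    | Sum.inr a, Sum.inr b => G₂.Adj a b
    | _, _ => False
  symm := ⟨by rintro (a | a) (b | b) h <;> simp_all <;> exact h.symm⟩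
  loopless := ⟨by rintro (a | a) h <;> simp_all⟩

lemma mem_zpowers_iff_orderOf_dvd' {α : Type*} [Group α] [Fintype α] [IsCyclic α]
    {a b : α} : a ∈ Subgroup.zpowers b ↔ orderOf a ∣ orderOf b := by
  classical
  refine ⟨orderOf_dvd_of_mem_zpowers, fun h => ?_⟩
  have hb : 0 < orderOf b := orderOf_pos b
  set S : Finset α := Finset.univ.filter (fun x => x ^ orderOf b = 1) with hS
  have hsub : (Subgroup.zpowers b : Set α).toFinset ⊆ S := by
    intro x hx
    simp only [Set.mem_toFinset, SetLike.mem_coe] at hx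
    simp only [hS, Finset.mem_filter, Finset.mem_univ, true_and]
    exact orderOf_dvd_iff_pow_eq_one.mp (orderOf_dvd_of_mem_zpowers hx)
  have hcard : (Subgroup.zpowers b : Set α).toFinset.card = orderOf b := by
    rw [Set.toFinset_card]
    simpa using Fintype.card_zpowers (x := b)
  have hle : S.card ≤ (Subgroup.zpowers b : Set α).toFinset.card := by
    rw [hcard]
    simpa [hS] using IsCyclic.card_pow_eq_one_le (α := α) hb
  have heq := Finset.eq_of_subset_of_card_le hsub hle
  have ha : a ∈ S := by
    simp [hS, orderOf_dvd_iff_pow_eq_one.mp h]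
  rw [← heq] at ha
  simpa using ha

lemma dvd_mul_prime_cases' {p q d : ℕ} (hp : p.Prime) (hq : q.Prime)
    (h : d ∣ p * q) : d = 1 ∨ d = p ∨ d = q ∨ d = p * q := by
  by_cases hpd : p ∣ d
  · obtain ⟨e, rfl⟩ := hpd
    have he : e ∣ q := (Nat.mul_dvd_mul_iff_left hp.pos).mp h
    rcases hq.eq_one_or_self_of_dvd e he with rfl | rfl
    · right; left; simp
    · right; right; right; rfl
  · have hco : Nat.Coprime p d := hp.coprime_iff_not_dvd.mpr hpd
    have hdq : d ∣ q := (Nat.Coprime.dvd_of_dvd_mul_left hco.symm h)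
    rcases hq.eq_one_or_self_of_dvd d hdq with rfl | rfl
    · left; rfl
    · right; right; left; rfl

section Main

variable (p q : ℕ)

abbrev Gpq := Multiplicative (ZMod (p * q))
abbrev Vpq := {g : Gpq p q // g ≠ 1}

/-- For distinct primes `p` and `q`, the complement of the proper power graph of
`ℤ/pqℤ` is isomorphic to `K_{p−1,q−1} ∪ K̄_{(p−1)(q−1)}`: two vertices are adjacent
iff one has order `p` and the other has order `q` (so the elements of order `p` and
of order `q` form a complete bipartite graph and the `(p−1)(q−1)` generators are
isolated). -/
theorem propPowerCompl_zmod_pq (p q : ℕ) (hp : p.Prime) (hq : q.Prime) (hpq : p ≠ q) :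
    (∀ u v : {g : Multiplicative (ZMod (p * q)) // g ≠ 1},
      (propPowerCompl (Multiplicative (ZMod (p * q)))).Adj u v ↔
        ((orderOf (u : Multiplicative (ZMod (p * q))) = p ∧
            orderOf (v : Multiplicative (ZMod (p * q))) = q) ∨
          (orderOf (u : Multiplicative (ZMod (p * q))) = q ∧
            orderOf (v : Multiplicative (ZMod (p * q))) = p))) ∧
    Nonempty
      ((propPowerCompl (Multiplicative (ZMod (p * q)))) ≃g
        SimpleGraph.disjUnionGraph
          (completeBipartiteGraph (Fin (p - 1)) (Fin (q - 1)))
          (⊥ : SimpleGraph (Fin ((p - 1) * (q - 1))))) := by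
    classical
  haveI : NeZero (p * q) := ⟨Nat.mul_ne_zero hp.pos.ne' hq.pos.ne'⟩
  have hcardG : Fintype.card (Gpq p q) = p * q := by
    rw [Fintype.card_multiplicative, ZMod.card]
  have hplt : p < p * q := (Nat.lt_mul_iff_one_lt_right hp.pos).mpr hq.one_lt
  have hqlt : q < p * q := (Nat.lt_mul_iff_one_lt_left hq.pos).mpr hp.one_lt
  have hpq1 : (1:ℕ) < p * q := lt_trans hp.one_lt hplt
  have hpqp : p * q ≠ p := hplt.ne'
  have hpqq : p * q ≠ q := hqlt.ne'
  have hnpq : ¬ p ∣ q := fun h => hpq ((Nat.prime_dvd_prime_iff_eq hp hq).mp h)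
  have hnqp : ¬ q ∣ p := fun h => hpq.symm ((Nat.prime_dvd_prime_iff_eq hq hp).mp h)
  have hnpqp : ¬ p * q ∣ p := fun h => absurd (Nat.le_of_dvd hp.pos h) (not_le.mpr hplt)
  have hnpqq : ¬ p * q ∣ q := fun h => absurd (Nat.le_of_dvd hq.pos h) (not_le.mpr hqlt)
  -- order trichotomy
  have tri : ∀ g : Gpq p q, g ≠ 1 → orderOf g = p ∨ orderOf g = q ∨ orderOf g = p * q := by
    intro g hg
    have hd : orderOf g ∣ p * q := by
      have := orderOf_dvd_card (x := g); rwa [hcardG] at this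
    rcases dvd_mul_prime_cases' hp hq hd with h1 | h | h | h
    · exact absurd (orderOf_eq_one_iff.mp h1) hg
    · exact Or.inl h
    · exact Or.inr (Or.inl h)
    · exact Or.inr (Or.inr h)
  -- part 1
  have hadj : ∀ u v : Vpq p q,
      (propPowerCompl (Gpq p q)).Adj u v ↔
        ((orderOf (u : Gpq p q) = p ∧ orderOf (v : Gpq p q) = q) ∨
          (orderOf (u : Gpq p q) = q ∧ orderOf (v : Gpq p q) = p)) := by
    intro u v
    show ((u : Gpq p q) ∉ Subgroup.zpowers (v : Gpq p q) ∧
        (v : Gpq p q) ∉ Subgroup.zpowers (u : Gpq p q)) ↔ _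
    rw [mem_zpowers_iff_orderOf_dvd', mem_zpowers_iff_orderOf_dvd']
    rcases tri u.1 u.2 with hu | hu | hu <;> rcases tri v.1 v.2 with hv | hv | hv <;>
      rw [hu, hv] <;>
      simp [hpq, Ne.symm hpq, hpqp, hpqq, hnpq, hnqp, hnpqp, hnpqq, dvd_mul_right,
        dvd_mul_left]
  refine ⟨hadj, ?_⟩
  -- cardinalities
  have cardA : Fintype.card {v : Vpq p q // orderOf (v : Gpq p q) = p} = p - 1 := by
    have e1 : {v : Vpq p q // orderOf (v : Gpq p q) = p} ≃ {g : Gpq p q // orderOf g = p} :=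
      (Equiv.subtypeSubtypeEquivSubtypeInter (fun g : Gpq p q => g ≠ 1)
          (fun g : Gpq p q => orderOf g = p)).trans
        (Equiv.subtypeEquivRight
          (fun g => ⟨fun h => h.2, fun h => ⟨fun h1 => hp.ne_one
            (by rw [h1, orderOf_one] at h; exact h.symm), h⟩⟩))
    rw [Fintype.card_congr e1, Fintype.card_subtype]
    rw [IsCyclic.card_orderOf_eq_totient (α := Gpq p q)
      (by rw [hcardG]; exact dvd_mul_right p q)]
    exact Nat.totient_prime hp
  have cardB : Fintype.card {w : {v : Vpq p q // ¬ orderOf (v : Gpq p q) = p} //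
      orderOf ((w : Vpq p q) : Gpq p q) = q} = q - 1 := by
    have e1 : {w : {v : Vpq p q // ¬ orderOf (v : Gpq p q) = p} //
        orderOf ((w : Vpq p q) : Gpq p q) = q} ≃ {g : Gpq p q // orderOf g = q} :=
      (Equiv.subtypeSubtypeEquivSubtypeInter
          (fun v : Vpq p q => ¬ orderOf (v : Gpq p q) = p)
          (fun v : Vpq p q => orderOf (v : Gpq p q) = q)).trans
        (((Equiv.subtypeSubtypeEquivSubtypeInter (fun g : Gpq p q => g ≠ 1)
          (fun g : Gpq p q => ¬ orderOf g = p ∧ orderOf g = q)).trans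
        (Equiv.subtypeEquivRight
          (fun g => ⟨fun h => h.2.2, fun h => ⟨fun h1 => hq.ne_one
            (by rw [h1, orderOf_one] at h; exact h.symm),
            fun h1 => hpq (h1.symm.trans h), h⟩⟩))))
    rw [Fintype.card_congr e1, Fintype.card_subtype]
    rw [IsCyclic.card_orderOf_eq_totient (α := Gpq p q)
      (by rw [hcardG]; exact dvd_mul_left q p)]
    exact Nat.totient_prime hq
  have cardC : Fintype.card {w : {v : Vpq p q // ¬ orderOf (v : Gpq p q) = p} //
      ¬ orderOf ((w : Vpq p q) : Gpq p q) = q} = (p - 1) * (q - 1) := by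
    have e1 : {w : {v : Vpq p q // ¬ orderOf (v : Gpq p q) = p} //
        ¬ orderOf ((w : Vpq p q) : Gpq p q) = q} ≃ {g : Gpq p q // orderOf g = p * q} :=
      (Equiv.subtypeSubtypeEquivSubtypeInter
          (fun v : Vpq p q => ¬ orderOf (v : Gpq p q) = p)
          (fun v : Vpq p q => ¬ orderOf (v : Gpq p q) = q)).trans
        (((Equiv.subtypeSubtypeEquivSubtypeInter (fun g : Gpq p q => g ≠ 1)
          (fun g : Gpq p q => ¬ orderOf g = p ∧ ¬ orderOf g = q)).trans
        (Equiv.subtypeEquivRight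
          (fun g => ⟨fun h => ((tri g h.1).resolve_left h.2.1).resolve_left h.2.2,
            fun h => ⟨fun h1 => hpq1.ne' (by rw [h1, orderOf_one] at h; exact h.symm),
              ⟨fun h1 => hpqp (h.symm.trans h1), fun h1 => hpqq (h.symm.trans h1)⟩⟩⟩))))
    rw [Fintype.card_congr e1, Fintype.card_subtype]
    rw [IsCyclic.card_orderOf_eq_totient (α := Gpq p q) (by rw [hcardG])]
    rw [Nat.totient_mul ((Nat.coprime_primes hp hq).mpr hpq), Nat.totient_prime hp, Nat.totient_prime hq]
  -- build the equivalence
  let eA : {v : Vpq p q // orderOf (v : Gpq p q) = p} ≃ Fin (p - 1) :=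
    Fintype.equivFinOfCardEq cardA
  let eB : {w : {v : Vpq p q // ¬ orderOf (v : Gpq p q) = p} //
      orderOf ((w : Vpq p q) : Gpq p q) = q} ≃ Fin (q - 1) := Fintype.equivFinOfCardEq cardB
  let eC : {w : {v : Vpq p q // ¬ orderOf (v : Gpq p q) = p} //
      ¬ orderOf ((w : Vpq p q) : Gpq p q) = q} ≃ Fin ((p - 1) * (q - 1)) :=
    Fintype.equivFinOfCardEq cardC
  let e : Vpq p q ≃ (Fin (p - 1) ⊕ Fin (q - 1)) ⊕ Fin ((p - 1) * (q - 1)) :=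
    ((Equiv.sumCompl (fun v : Vpq p q => orderOf (v : Gpq p q) = p)).symm.trans
      (Equiv.sumCongr eA
        (((Equiv.sumCompl (fun w : {v : Vpq p q // ¬ orderOf (v : Gpq p q) = p} =>
            orderOf ((w : Vpq p q) : Gpq p q) = q)).symm).trans
          (Equiv.sumCongr eB eC)))).trans (Equiv.sumAssoc _ _ _).symm
  have he1 : ∀ (v : Vpq p q) (h : orderOf (v : Gpq p q) = p),
      e v = Sum.inl (Sum.inl (eA ⟨v, h⟩)) := by
    intro v h
    have h0 : (Equiv.sumCompl fun v : Vpq p q => orderOf (v : Gpq p q) = p).symm v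
        = Sum.inl ⟨v, h⟩ := Equiv.sumCompl_symm_apply_of_pos (a := v) h
    simp [e, h0]
  have he2 : ∀ (v : Vpq p q) (h1 : ¬ orderOf (v : Gpq p q) = p)
      (h2 : orderOf (v : Gpq p q) = q),
      e v = Sum.inl (Sum.inr (eB ⟨⟨v, h1⟩, h2⟩)) := by
    intro v h1 h2
    have h0 : (Equiv.sumCompl fun v : Vpq p q => orderOf (v : Gpq p q) = p).symm v
        = Sum.inr ⟨v, h1⟩ := Equiv.sumCompl_symm_apply_of_neg (a := v) h1
    have h0' : (Equiv.sumCompl fun w : {v : Vpq p q // ¬ orderOf (v : Gpq p q) = p} =>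
        orderOf ((w : Vpq p q) : Gpq p q) = q).symm ⟨v, h1⟩
        = Sum.inl ⟨⟨v, h1⟩, h2⟩ := Equiv.sumCompl_symm_apply_of_pos (p := fun w : {v : Vpq p q // ¬ orderOf (v : Gpq p q) = p} => orderOf ((w : Vpq p q) : Gpq p q) = q) (a := ⟨v, h1⟩) h2
    simp [e, h0, h0']
  have he3 : ∀ (v : Vpq p q) (h1 : ¬ orderOf (v : Gpq p q) = p)
      (h2 : ¬ orderOf (v : Gpq p q) = q),
      e v = Sum.inr (eC ⟨⟨v, h1⟩, h2⟩) := by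
    intro v h1 h2
    have h0 : (Equiv.sumCompl fun v : Vpq p q => orderOf (v : Gpq p q) = p).symm v
        = Sum.inr ⟨v, h1⟩ := Equiv.sumCompl_symm_apply_of_neg (a := v) h1
    have h0' : (Equiv.sumCompl fun w : {v : Vpq p q // ¬ orderOf (v : Gpq p q) = p} =>
        orderOf ((w : Vpq p q) : Gpq p q) = q).symm ⟨v, h1⟩
        = Sum.inr ⟨⟨v, h1⟩, h2⟩ := Equiv.sumCompl_symm_apply_of_neg (p := fun w : {v : Vpq p q // ¬ orderOf (v : Gpq p q) = p} => orderOf ((w : Vpq p q) : Gpq p q) = q) (a := ⟨v, h1⟩) h2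
    simp [e, h0, h0']
  refine ⟨⟨e, ?_⟩⟩
  intro u v
  rw [hadj u v]
  have key : ∀ x : Vpq p q, (orderOf (x : Gpq p q) = p ∧ ∃ i, e x = Sum.inl (Sum.inl i)) ∨
      (orderOf (x : Gpq p q) = q ∧ ∃ i, e x = Sum.inl (Sum.inr i)) ∨
      (orderOf (x : Gpq p q) = p * q ∧ ∃ i, e x = Sum.inr i) := by
    intro x
    rcases tri x.1 x.2 with h | h | h
    · exact Or.inl ⟨h, _, he1 x h⟩
    · exact Or.inr (Or.inl ⟨h, _, he2 x (fun h1 => hpq (h1.symm.trans h)) h⟩)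
    · exact Or.inr (Or.inr ⟨h, _, he3 x (fun h1 => hpqp (h.symm.trans h1))
        (fun h1 => hpqq (h.symm.trans h1))⟩)
  rcases key u with ⟨hu, i, hi⟩ | ⟨hu, i, hi⟩ | ⟨hu, i, hi⟩ <;>
    rcases key v with ⟨hv, j, hj⟩ | ⟨hv, j, hj⟩ | ⟨hv, j, hj⟩ <;>
      rw [hi, hj, hu, hv] <;>
      simp [SimpleGraph.disjUnionGraph, hpq, Ne.symm hpq, hpqp, hpqq,
        Ne.symm hpqp, Ne.symm hpqq]

end Main
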